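/- Fix t ≥ 0, α ≠ 0 and λ ∈ ℂ with λ ≠ 0, and set K(t,α,λ) := |exp(i^N λ^N α t / N!)| · ( |α λ^N|/N! + |α|^2 · t · |λ|^{2N} · ( 1/(2(N!)^2) − 1/(2N)! ) ). Then for every ε > 0 there exists n_ε ∈ ℕ such that for all n > n_ε: | φ_n(t,λ) − exp(i^N λ^N α t / N!) | < (1+ε) · K(t,α,λ) / n. -/

import Mathlib

open Complex Real Filter Finset

lemma sum_omega_pow (N j : ℕ) (hN : 0 < N) :
    ∑ k ∈ Finset.range N, (Complex.exp (2 * Real.pi * Complex.I * k / N)) ^ j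
      = if N ∣ j then (N : ℂ) else 0 := by
  have hNC : (N : ℂ) ≠ 0 := Nat.cast_ne_zero.mpr hN.ne'
  have hterm : ∀ k ∈ Finset.range N,
      (Complex.exp (2 * Real.pi * Complex.I * k / N)) ^ j
        = (Complex.exp (2 * Real.pi * Complex.I * j / N)) ^ k := by
    intro k _
    rw [← Complex.exp_nat_mul, ← Complex.exp_nat_mul]
    ring_nf
  rw [Finset.sum_congr rfl hterm]
  set ζ : ℂ := Complex.exp (2 * Real.pi * Complex.I * j / N) with hζ
  by_cases hdvd : N ∣ j
  · rw [if_pos hdvd]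
    obtain ⟨q, hq⟩ := hdvd
    have hζ1 : ζ = 1 := by
      rw [hζ, hq]
      have : (2 * Real.pi * Complex.I * (N * q : ℕ) / N : ℂ) = (q : ℕ) * (2 * Real.pi * Complex.I) := by
        push_cast
        field_simp
      rw [this]
      exact Complex.exp_nat_mul_two_pi_mul_I q
    simp [hζ1]
  · rw [if_neg hdvd]
    have hζN : ζ ^ N = 1 := by
      rw [hζ, ← Complex.exp_nat_mul]
      have : (N : ℂ) * (2 * Real.pi * Complex.I * j / N) = (j : ℕ) * (2 * Real.pi * Complex.I) := by
        field_simp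
      rw [this]
      exact Complex.exp_nat_mul_two_pi_mul_I j
    have hζ1 : ζ ≠ 1 := by
      intro h
      rw [hζ, Complex.exp_eq_one_iff] at h
      obtain ⟨m, hm⟩ := h
      apply hdvd
      have h2 : (2 * Real.pi * Complex.I : ℂ) ≠ 0 := by
        simp [Real.pi_ne_zero, Complex.I_ne_zero]
      have hjc : (j : ℂ) = (m : ℂ) * N := by
        field_simp at hm
        have h3 : (2 * Real.pi * Complex.I : ℂ) * j = (2 * Real.pi * Complex.I) * (m * N) := by
          linear_combination (2 * Real.pi * Complex.I) * hm
        exact mul_left_cancel₀ h2 h3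
      have hjz : (j : ℤ) = m * N := by exact_mod_cast hjc
      have : (N : ℤ) ∣ (j : ℤ) := ⟨m, by linarith⟩
      exact_mod_cast this
    rw [geom_sum_eq hζ1, hζN]
    simp


lemma trunc_sum (N : ℕ) (hN : 2 < N) (z : ℂ) (hz : (norm : ℂ → ℝ) z ≤ 1) :
    (norm : ℂ → ℝ) ((1/(N:ℂ)) * (∑ k ∈ Finset.range N,
        Complex.exp (z * Complex.exp (2 * Real.pi * Complex.I * k / N)))
      - (1 + z ^ N / ((N.factorial : ℂ)) + z ^ (2*N) / (((2*N).factorial : ℂ))))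
      ≤ (norm : ℂ → ℝ) z ^ (3*N) := by
  have hN0 : 0 < N := by omega
  have hNC : (N : ℂ) ≠ 0 := Nat.cast_ne_zero.mpr hN0.ne'
  set M := 3 * N with hM
  have hM0 : 0 < M := by omega
  -- the truncated sums
  set T : ℂ → ℂ := fun w => ∑ j ∈ Finset.range M, w ^ j / (j.factorial : ℂ) with hT
  have habsω : ∀ k : ℕ, (norm : ℂ → ℝ) (Complex.exp (2 * Real.pi * Complex.I * k / N)) = 1 := by
    intro k
    rw [Complex.norm_exp]
    have : (2 * Real.pi * Complex.I * k / N).re = 0 := by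
      have : (2 * Real.pi * Complex.I * k / N : ℂ) = ((2 * Real.pi * k / N : ℝ) : ℂ) * Complex.I := by
        push_cast; ring
      rw [this]
      simp
    rw [this, Real.exp_zero]
  -- step 2 : averaged truncated sum
  have hstep2 : (1/(N:ℂ)) * (∑ k ∈ Finset.range N, T (z * Complex.exp (2 * Real.pi * Complex.I * k / N)))
      = 1 + z ^ N / ((N.factorial : ℂ)) + z ^ (2*N) / (((2*N).factorial : ℂ)) := by
    have h1 : ∀ k ∈ Finset.range N, T (z * Complex.exp (2 * Real.pi * Complex.I * k / N))
        = ∑ j ∈ Finset.range M, (z ^ j / (j.factorial : ℂ)) * (Complex.exp (2 * Real.pi * Complex.I * k / N)) ^ j := by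
      intro k _
      refine Finset.sum_congr rfl fun j _ => ?_
      rw [mul_pow]; ring
    rw [Finset.sum_congr rfl h1, Finset.sum_comm]
    have h2 : ∀ j ∈ Finset.range M,
        (∑ k ∈ Finset.range N, (z ^ j / (j.factorial : ℂ)) * (Complex.exp (2 * Real.pi * Complex.I * k / N)) ^ j)
        = (z ^ j / (j.factorial : ℂ)) * (if N ∣ j then (N:ℂ) else 0) := by
      intro j _
      rw [← Finset.mul_sum, sum_omega_pow N j hN0]
    rw [Finset.sum_congr rfl h2]
    have h3 : Finset.filter (fun j => N ∣ j) (Finset.range M) = {0, N, 2*N} := by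
      ext j
      simp only [Finset.mem_filter, Finset.mem_range, Finset.mem_insert, Finset.mem_singleton]
      constructor
      · rintro ⟨hj, q, rfl⟩
        have hq3 : q < 3 := by
          by_contra hq
          push_neg at hq
          have := Nat.mul_le_mul_left N hq
          omega
        interval_cases q
        · left; ring
        · right; left; ring
        · right; right; ring
      · rintro (rfl | rfl | rfl)
        · exact ⟨by omega, dvd_zero _⟩
        · exact ⟨by omega, dvd_refl _⟩
        · exact ⟨by omega, dvd_mul_left _ 2⟩
    rw [← Finset.sum_filter_add_sum_filter_not (Finset.range M) (fun j => N ∣ j)]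
    have h4 : ∑ j ∈ Finset.range M with ¬ N ∣ j, (z ^ j / (j.factorial : ℂ)) * (if N ∣ j then (N:ℂ) else 0) = 0 := by
      refine Finset.sum_eq_zero fun j hj => ?_
      rw [Finset.mem_filter] at hj
      rw [if_neg hj.2, mul_zero]
    rw [h4, add_zero, h3]
    have hne1 : (0:ℕ) ≠ N := by omega
    have hne2 : (0:ℕ) ≠ 2*N := by omega
    have hne3 : N ≠ 2*N := by omega
    rw [Finset.sum_insert (by simp [hne1, hne2]), Finset.sum_insert (by simp [hne3]), Finset.sum_singleton]
    rw [if_pos (dvd_zero N), if_pos (dvd_refl N), if_pos (dvd_mul_left N 2)]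
    have hf1 : (N.factorial : ℂ) ≠ 0 := Nat.cast_ne_zero.mpr (Nat.factorial_ne_zero _)
    have hf2 : (((2*N).factorial : ℕ) : ℂ) ≠ 0 := Nat.cast_ne_zero.mpr (Nat.factorial_ne_zero _)
    field_simp
    ring
  -- step 1 : pointwise bound
  have hstep1 : ∀ k ∈ Finset.range N,
      (norm : ℂ → ℝ) (Complex.exp (z * Complex.exp (2 * Real.pi * Complex.I * k / N))
        - T (z * Complex.exp (2 * Real.pi * Complex.I * k / N))) ≤ (norm : ℂ → ℝ) z ^ M := by
    intro k _
    set w := z * Complex.exp (2 * Real.pi * Complex.I * k / N) with hw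
    have habsw : (norm : ℂ → ℝ) w = (norm : ℂ → ℝ) z := by
      rw [hw, norm_mul, habsω k, mul_one]
    have hw1 : (norm : ℂ → ℝ) w ≤ 1 := by rw [habsw]; exact hz
    have := Complex.exp_bound hw1 hM0
    refine this.trans ?_
    rw [habsw]
    have hc : ((M.succ : ℝ) * ((M.factorial : ℝ) * M)⁻¹) ≤ 1 := by
      rw [mul_inv_le_iff₀ (by positivity), one_mul]
      have h5 : (M : ℝ) ≤ (M.factorial : ℝ) := by
        exact_mod_cast Nat.self_le_factorial M
      have h6 : (2:ℝ) ≤ M := by exact_mod_cast (by omega : 2 ≤ M)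
      push_cast
      nlinarith
    nlinarith [pow_nonneg (norm_nonneg z) M]
  -- combine
  calc (norm : ℂ → ℝ) ((1/(N:ℂ)) * (∑ k ∈ Finset.range N,
        Complex.exp (z * Complex.exp (2 * Real.pi * Complex.I * k / N)))
      - (1 + z ^ N / ((N.factorial : ℂ)) + z ^ (2*N) / (((2*N).factorial : ℂ))))
      = (norm : ℂ → ℝ) ((1/(N:ℂ)) * ∑ k ∈ Finset.range N,
          (Complex.exp (z * Complex.exp (2 * Real.pi * Complex.I * k / N))
            - T (z * Complex.exp (2 * Real.pi * Complex.I * k / N)))) := by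
        rw [Finset.sum_sub_distrib, mul_sub, ← hstep2]
    _ ≤ (1/(N:ℝ)) * ∑ k ∈ Finset.range N, (norm : ℂ → ℝ)
          (Complex.exp (z * Complex.exp (2 * Real.pi * Complex.I * k / N))
            - T (z * Complex.exp (2 * Real.pi * Complex.I * k / N))) := by
        rw [norm_mul]
        gcongr
        · simp
        · exact norm_sum_le _ _
    _ ≤ (1/(N:ℝ)) * ∑ k ∈ Finset.range N, (norm : ℂ → ℝ) z ^ M := by
        refine mul_le_mul_of_nonneg_left ?_ (by positivity)
        exact Finset.sum_le_sum hstep1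
    _ = (norm : ℂ → ℝ) z ^ M := by
        rw [Finset.sum_const, Finset.card_range, nsmul_eq_mul]
        field_simp


lemma fact_ineq (N : ℕ) (hN : 1 ≤ N) : 2 * (N.factorial)^2 ≤ (2*N).factorial := by
  have h := Nat.choose_mul_factorial_mul_factorial (show N ≤ 2*N by omega)
  have h2 : 2*N - N = N := by omega
  rw [h2] at h
  have hc : 2 ≤ (2*N).choose N := by
    calc 2 ≤ (2*N).choose 1 := by rw [Nat.choose_one_right]; omega
    _ ≤ (2*N).choose N := by
          have := Nat.choose_le_middle 1 (2*N)
          have h3 : 2*N/2 = N := by omega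
          rwa [h3] at this
  nlinarith [Nat.factorial_pos N]

lemma one_add_pow_sub_one (u : ℂ) (m : ℕ) :
    (norm : ℂ → ℝ) ((1+u)^m - 1) ≤ (m : ℝ) * (norm : ℂ → ℝ) u * Real.exp (m * (norm : ℂ → ℝ) u) := by
  have h := geom_sum_mul (1+u) m
  have h1 : (1+u)^m - 1 = (∑ i ∈ Finset.range m, (1+u)^i) * u := by
    rw [← h]; ring_nf
  rw [h1, norm_mul]
  have h2 : (norm : ℂ → ℝ) (∑ i ∈ Finset.range m, (1+u)^i) ≤ (m : ℝ) * Real.exp (m * (norm : ℂ → ℝ) u) := by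
    calc (norm : ℂ → ℝ) (∑ i ∈ Finset.range m, (1+u)^i)
        ≤ ∑ i ∈ Finset.range m, (norm : ℂ → ℝ) ((1+u)^i) := norm_sum_le _ _
      _ ≤ ∑ i ∈ Finset.range m, Real.exp (m * (norm : ℂ → ℝ) u) := by
          refine Finset.sum_le_sum fun i hi => ?_
          rw [norm_pow]
          calc (norm : ℂ → ℝ) (1+u) ^ i ≤ (1 + (norm : ℂ → ℝ) u) ^ i := by
                gcongr
                calc (norm : ℂ → ℝ) (1+u) ≤ (norm : ℂ → ℝ) 1 + (norm : ℂ → ℝ) u := norm_add_le _ _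
                  _ = 1 + (norm : ℂ → ℝ) u := by rw [norm_one]
            _ ≤ Real.exp ((norm : ℂ → ℝ) u) ^ i := by
                gcongr
                · linarith [Real.add_one_le_exp ((norm : ℂ → ℝ) u)]
            _ = Real.exp (i * (norm : ℂ → ℝ) u) := by rw [← Real.exp_nat_mul]
            _ ≤ Real.exp (m * (norm : ℂ → ℝ) u) := by
                rw [Finset.mem_range] at hi
                have : (i:ℝ) ≤ m := by exact_mod_cast hi.le
                gcongr
      _ = (m:ℝ) * Real.exp (m * (norm : ℂ → ℝ) u) := by
          rw [Finset.sum_const, Finset.card_range, nsmul_eq_mul]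
  calc (norm : ℂ → ℝ) (∑ i ∈ Finset.range m, (1+u)^i) * (norm : ℂ → ℝ) u
      ≤ ((m:ℝ) * Real.exp (m * (norm : ℂ → ℝ) u)) * (norm : ℂ → ℝ) u := by
        gcongr
    _ = (m:ℝ) * (norm : ℂ → ℝ) u * Real.exp (m * (norm : ℂ → ℝ) u) := by ring

set_option maxHeartbeats 2000000 in
/-- rate of convergence. Fix t ≥ 0, α ≠ 0, λ ≠ 0, and set
K(t,α,λ) = |exp(i^N λ^N α t/N!)|·(|αλ^N|/N! + |α|²t|λ|^{2N}(1/(2(N!)²) − 1/(2N)!)).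
For every ε > 0 there is n_ε such that for all n > n_ε,
|φ_n(t,λ) − exp(i^N λ^N α t/N!)| < (1+ε)·K(t,α,λ)/n, where
φ_n(t,λ) = ((1/N)Σ_{k<N} exp(iλβω_k/n^{1/N}))^{⌊nt⌋}. -/

theorem rate_of_convergence (N : ℕ) (hN : 2 < N) (α β : ℂ) (hβ : β ^ N = α)
    (hα : α ≠ 0) (t : ℝ) (ht : 0 ≤ t) (l : ℂ) (hl : l ≠ 0) (ε : ℝ) (hε : 0 < ε) :
    ∃ nε : ℕ, ∀ n : ℕ, nε < n →
      ‖(((1 / (N : ℂ)) *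
          ∑ k ∈ Finset.range N,
            Complex.exp (Complex.I * l * β * Complex.exp (2 * Real.pi * Complex.I * k / N) /
              ((((n : ℝ) ^ ((N : ℝ)⁻¹)) : ℝ) : ℂ))) ^ ⌊(n : ℝ) * t⌋₊
          - Complex.exp (Complex.I ^ N * l ^ N * α * (t : ℂ) / (Nat.factorial N : ℂ)))‖
      < (1 + ε) *
          (‖(Complex.exp (Complex.I ^ N * l ^ N * α * (t : ℂ) / (Nat.factorial N : ℂ)))‖ *
            (‖(α * l ^ N)‖ / (Nat.factorial N : ℝ)
              + ‖α‖ ^ 2 * t * ‖l‖ ^ (2 * N) *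
                (1 / (2 * ((Nat.factorial N : ℝ)) ^ 2) - 1 / (Nat.factorial (2 * N) : ℝ))))
        / n := by
  have hN0 : 0 < N := by omega
  set c : ℂ := Complex.I ^ N * l ^ N * α with hc
  have hc0 : c ≠ 0 := by
    simp [hc, Complex.I_ne_zero, hl, hα, pow_ne_zero]
  set a : ℂ := c / (N.factorial : ℂ) with ha
  have hfacC : ((N.factorial : ℕ) : ℂ) ≠ 0 := Nat.cast_ne_zero.mpr (Nat.factorial_ne_zero N)
  have ha0 : a ≠ 0 := div_ne_zero hc0 hfacC
  set A : ℝ := (norm : ℂ → ℝ) a with hA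
  have hA0 : 0 < A := norm_pos_iff.mpr ha0
  set B : ℝ := ((norm : ℂ → ℝ) c)^2 * (1/(2*((N.factorial:ℝ))^2) - 1/(((2*N).factorial : ℝ))) with hB
  have hfacpos : (0:ℝ) < (N.factorial : ℝ) := by exact_mod_cast Nat.factorial_pos N
  have hfac2pos : (0:ℝ) < ((2*N).factorial : ℝ) := by exact_mod_cast Nat.factorial_pos (2*N)
  have hBfac : (0:ℝ) ≤ 1/(2*((N.factorial:ℝ))^2) - 1/(((2*N).factorial : ℝ)) := by
    have h := fact_ineq N (by omega)
    have h' : (2:ℝ) * (N.factorial:ℝ)^2 ≤ ((2*N).factorial : ℝ) := by exact_mod_cast h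
    have h2 : (0:ℝ) < 2*((N.factorial:ℝ))^2 := by positivity
    rw [sub_nonneg, div_le_div_iff₀ hfac2pos h2]
    nlinarith
  have hB0 : 0 ≤ B := by
    apply mul_nonneg (by positivity) hBfac
  set C₂ : ℝ := ((norm : ℂ → ℝ) c)^3 + A^3 with hC₂
  have hC₂0 : 0 ≤ C₂ := by positivity
  set L : ℂ := Complex.exp (a * (t:ℂ)) with hL
  have hLeq : Complex.exp (Complex.I ^ N * l ^ N * α * (t : ℂ) / (Nat.factorial N : ℂ)) = L := by
    rw [hL]; congr 1; rw [ha, hc]; ring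
  have hLpos : 0 < (norm : ℂ → ℝ) L := norm_pos_iff.mpr (Complex.exp_ne_zero _)
  -- the limit function g
  set g : ℝ → ℝ := fun x => Real.exp (A*x) * (t*(B + C₂*x)*Real.exp (A*x)) *
      Real.exp (x * (t*(B + C₂*x)*Real.exp (A*x))) + A + (3/4)*A^2*x with hg
  have hgcont : Continuous g := by
    apply Continuous.add
    apply Continuous.add
    · fun_prop
    · fun_prop
    · fun_prop
  have hg0 : g 0 = t*B + A := by simp [hg]
  have hgtend : Tendsto (fun n : ℕ => g (1/(n:ℝ))) atTop (nhds (t*B + A)) := by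
    rw [← hg0]
    exact (hgcont.tendsto 0).comp tendsto_one_div_atTop_nhds_zero_nat
  have hlim_lt : t*B + A < (1+ε) * (A + t*B) := by nlinarith [mul_nonneg ht hB0]
  have hev1 : ∀ᶠ n : ℕ in atTop, g (1/(n:ℝ)) < (1+ε) * (A + t*B) :=
    hgtend.eventually_lt_const hlim_lt
  have hcast : Tendsto (fun n : ℕ => (n:ℝ)) atTop atTop := tendsto_natCast_atTop_atTop
  have hev2 : ∀ᶠ n : ℕ in atTop, (norm : ℂ → ℝ) c ≤ (n:ℝ) := hcast.eventually_ge_atTop _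
  have hev3 : ∀ᶠ n : ℕ in atTop, A ≤ (n:ℝ) := hcast.eventually_ge_atTop _
  have hev4 : ∀ᶠ n : ℕ in atTop, 1 ≤ n := eventually_ge_atTop 1
  obtain ⟨n₀, hn₀⟩ := Filter.eventually_atTop.mp (((hev1.and hev2).and hev3).and hev4)
  refine ⟨n₀, fun n hn => ?_⟩
  obtain ⟨⟨⟨hg_n, hcn⟩, hAn⟩, h1n⟩ := hn₀ n hn.le
  have hnR : (0:ℝ) < (n:ℝ) := by exact_mod_cast h1n
  set nR : ℝ := (n:ℝ) with hnRdef
  have hnC : (n:ℂ) ≠ 0 := Nat.cast_ne_zero.mpr (by omega)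
  set r : ℝ := (n:ℝ) ^ ((N:ℝ)⁻¹) with hr
  set z : ℂ := Complex.I * l * β / (r:ℂ) with hz
  -- identify the base of the power with f
  have hsum : ∀ k ∈ Finset.range N,
      Complex.exp (Complex.I * l * β * Complex.exp (2 * Real.pi * Complex.I * k / N) / (r:ℂ))
        = Complex.exp (z * Complex.exp (2 * Real.pi * Complex.I * k / N)) := by
    intro k _
    rw [hz, mul_div_right_comm]
  set f : ℂ := (1/(N:ℂ)) * ∑ k ∈ Finset.range N,
      Complex.exp (z * Complex.exp (2 * Real.pi * Complex.I * k / N)) with hf_def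
  rw [Finset.sum_congr rfl hsum, hLeq, ← hf_def]
  -- z ^ N = c / n
  have hrN : ((r:ℝ):ℂ) ^ N = (n:ℂ) := by
    have h1 : r ^ N = (n:ℝ) := Real.rpow_inv_natCast_pow (Nat.cast_nonneg n) hN0.ne'
    calc ((r:ℝ):ℂ) ^ N = ((r ^ N : ℝ) : ℂ) := by push_cast; ring
      _ = (n:ℂ) := by rw [h1]; norm_cast
  have hzN : z ^ N = c / (n:ℂ) := by
    rw [hz, div_pow, hrN, mul_pow, mul_pow, hβ, hc]
  have habsZN : ((norm : ℂ → ℝ) z) ^ N = (norm : ℂ → ℝ) c / nR := by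
    rw [← norm_pow, hzN, norm_div, Complex.norm_natCast]
  have habsz1 : (norm : ℂ → ℝ) z ≤ 1 := by
    have h1 : ((norm : ℂ → ℝ) z) ^ N ≤ 1 := by
      rw [habsZN, div_le_one hnR]; exact hcn
    exact (pow_le_one_iff_of_nonneg (norm_nonneg z) hN0.ne').mp h1
  -- truncation of f
  set P : ℂ := 1 + (c/(n:ℂ)) / ((N.factorial:ℕ):ℂ) + (c/(n:ℂ))^2 / (((2*N).factorial:ℕ):ℂ) with hP
  have hfP : (norm : ℂ → ℝ) (f - P) ≤ ((norm : ℂ → ℝ) c / nR)^3 := by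
    have h1 := trunc_sum N hN z habsz1
    have h2 : z ^ (2*N) = (c/(n:ℂ))^2 := by rw [mul_comm, pow_mul, hzN]
    have h3 : ((norm : ℂ → ℝ) z) ^ (3*N) = ((norm : ℂ → ℝ) c / nR)^3 := by
      rw [mul_comm, pow_mul, habsZN]
    rw [hzN, h2, h3] at h1
    exact h1
  -- expansion of y
  set y : ℂ := Complex.exp (a / (n:ℂ)) with hy
  have hyne : y ≠ 0 := Complex.exp_ne_zero _
  have habs_an : (norm : ℂ → ℝ) (a/(n:ℂ)) = A / nR := by
    rw [norm_div, Complex.norm_natCast]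
  have han1 : (norm : ℂ → ℝ) (a/(n:ℂ)) ≤ 1 := by
    rw [habs_an, div_le_one hnR]; exact hAn
  set Py : ℂ := 1 + a/(n:ℂ) + (a/(n:ℂ))^2/2 with hPy
  have hyP : (norm : ℂ → ℝ) (y - Py) ≤ (A/nR)^3 := by
    have h1 := Complex.exp_bound han1 (show 0 < 3 by norm_num)
    have h2 : ∑ m ∈ Finset.range 3, (a/(n:ℂ))^m / (m.factorial : ℂ) = Py := by
      rw [hPy]
      rw [Finset.sum_range_succ, Finset.sum_range_succ, Finset.sum_range_one]
      norm_num [Nat.factorial]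
    rw [h2] at h1
    refine h1.trans ?_
    rw [habs_an]
    have h3 : ((3:ℕ).succ : ℝ) * (((3:ℕ).factorial : ℝ) * 3)⁻¹ ≤ 1 := by
      norm_num [Nat.factorial]
    nlinarith [pow_nonneg (div_nonneg hA0.le hnR.le) 3,
      pow_nonneg (norm_nonneg (a/(n:ℂ))) 3]
  -- P - Py
  have hquad : (norm : ℂ → ℝ) (c^2/(((2*N).factorial:ℕ):ℂ) - a^2/2) = B := by
    have h1 : c^2/(((2*N).factorial:ℕ):ℂ) - a^2/2
        = c^2 * (((1/(((2*N).factorial:ℕ):ℝ) - 1/(2*((N.factorial:ℕ):ℝ)^2)) : ℝ) : ℂ) := by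
      have hf2C : (((2*N).factorial:ℕ):ℂ) ≠ 0 := Nat.cast_ne_zero.mpr (Nat.factorial_ne_zero _)
      have e1 : (((1/(((2*N).factorial:ℕ):ℝ) - 1/(2*((N.factorial:ℕ):ℝ)^2)) : ℝ) : ℂ)
          = 1/(((2*N).factorial:ℕ):ℂ) - 1/(2*((N.factorial:ℕ):ℂ)^2) := by
        push_cast
        ring
      rw [ha, e1]
      ring
    rw [h1, norm_mul, norm_pow, Complex.norm_real, Real.norm_eq_abs, abs_of_nonpos (by linarith), hB]
    ring
  have hPPy : (norm : ℂ → ℝ) (P - Py) = B / nR^2 := by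
    have h1 : P - Py = (c^2/(((2*N).factorial:ℕ):ℂ) - a^2/2) / ((n:ℂ))^2 := by
      rw [hP, hPy, ha]
      ring
    rw [h1, norm_div, norm_pow, Complex.norm_natCast, hquad]
  -- f - y
  have hfy : (norm : ℂ → ℝ) (f - y) ≤ B/nR^2 + C₂/nR^3 := by
    have h1 : f - y = (f - P) - (y - Py) + (P - Py) := by ring
    rw [h1]
    calc (norm : ℂ → ℝ) ((f - P) - (y - Py) + (P - Py))
        ≤ (norm : ℂ → ℝ) ((f - P) - (y - Py)) + (norm : ℂ → ℝ) (P - Py) := norm_add_le _ _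
      _ ≤ ((norm : ℂ → ℝ) (f - P) + (norm : ℂ → ℝ) (y - Py)) + (norm : ℂ → ℝ) (P - Py) := by
          gcongr
          exact norm_sub_le _ _
      _ ≤ (((norm : ℂ → ℝ) c / nR)^3 + (A/nR)^3) + B/nR^2 := by
          rw [hPPy]; gcongr
      _ = B/nR^2 + C₂/nR^3 := by
          rw [hC₂]; field_simp; ring
  -- set up m, u
  set m : ℕ := ⌊(n:ℝ) * t⌋₊ with hm
  have hm_le : (m:ℝ) ≤ nR * t := Nat.floor_le (by positivity)
  have hm_gt : nR * t < (m:ℝ) + 1 := Nat.lt_floor_add_one _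
  set u : ℂ := (f - y)/y with hu_def
  have hfyu : f = y * (1 + u) := by
    rw [hu_def]; field_simp; ring
  -- |y|^m bound
  have habsy : (norm : ℂ → ℝ) y = Real.exp ((a/(n:ℂ)).re) := Complex.norm_exp _
  have hre_div : (a/(n:ℂ)).re = a.re / nR := by
    rw [show ((n:ℂ)) = ((nR:ℝ):ℂ) by rw [hnRdef]; norm_cast, Complex.div_ofReal_re]
  have habsre : |a.re| ≤ A := Complex.abs_re_le_norm a
  have habsL : (norm : ℂ → ℝ) L = Real.exp (a.re * t) := by
    rw [hL, Complex.norm_exp]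
    congr 1
    simp [Complex.mul_re]
  have hym_le : ((norm : ℂ → ℝ) y)^m ≤ (norm : ℂ → ℝ) L * Real.exp (A/nR) := by
    rw [habsy, ← Real.exp_nat_mul, habsL, ← Real.exp_add]
    apply Real.exp_le_exp.mpr
    rw [hre_div]
    rcases le_or_gt 0 a.re with hre | hre
    · have h1 : (m:ℝ) * (a.re/nR) ≤ (nR*t) * (a.re/nR) := by
        apply mul_le_mul_of_nonneg_right hm_le (by positivity)
      have h2 : (nR*t) * (a.re/nR) = a.re * t := by field_simp
      have h3 : 0 ≤ A/nR := by positivity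
      linarith
    · have h1 : (m:ℝ) * (a.re/nR) ≤ (nR*t - 1) * (a.re/nR) := by
        apply mul_le_mul_of_nonpos_right (by linarith) (by
          apply div_nonpos_of_nonpos_of_nonneg hre.le hnR.le)
      have h2 : (nR*t - 1) * (a.re/nR) = a.re * t - a.re/nR := by field_simp
      have hna : -A ≤ a.re := by linarith [neg_abs_le a.re]
      have h3 : -(A/nR) ≤ a.re/nR := by
        rw [← neg_div]
        gcongr
      linarith
  have hylow : Real.exp (-(A/nR)) ≤ (norm : ℂ → ℝ) y := by
    rw [habsy, hre_div]
    apply Real.exp_le_exp.mpr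
    rw [← neg_div]
    gcongr
    linarith [neg_abs_le a.re]
  have hypos : 0 < (norm : ℂ → ℝ) y := norm_pos_iff.mpr hyne
  have hu_le : (norm : ℂ → ℝ) u ≤ (B/nR^2 + C₂/nR^3) * Real.exp (A/nR) := by
    rw [hu_def, norm_div]
    calc (norm : ℂ → ℝ) (f - y) / (norm : ℂ → ℝ) y
        ≤ (norm : ℂ → ℝ) (f - y) / Real.exp (-(A/nR)) := by
          gcongr
      _ = (norm : ℂ → ℝ) (f - y) * Real.exp (A/nR) := by
          rw [Real.exp_neg, div_inv_eq_mul]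
      _ ≤ (B/nR^2 + C₂/nR^3) * Real.exp (A/nR) := by
          apply mul_le_mul_of_nonneg_right hfy (Real.exp_pos _).le
  set Q : ℝ := t*(B + C₂/nR)*Real.exp (A/nR) with hQ
  have hQ0 : 0 ≤ Q := by
    apply mul_nonneg (mul_nonneg ht ?_) (Real.exp_pos _).le
    have h0 : 0 ≤ C₂/nR := by positivity
    linarith
  have hQn0 : 0 ≤ Q/nR := div_nonneg hQ0 hnR.le
  have hmu : (m:ℝ) * (norm : ℂ → ℝ) u ≤ Q / nR := by
    calc (m:ℝ) * (norm : ℂ → ℝ) u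
        ≤ (nR*t) * ((B/nR^2 + C₂/nR^3) * Real.exp (A/nR)) := by
          apply mul_le_mul hm_le hu_le (norm_nonneg u) (by positivity)
      _ = Q / nR := by rw [hQ]; field_simp
  have hterm1 : (norm : ℂ → ℝ) (f^m - y^m)
      ≤ ((norm : ℂ → ℝ) L * Real.exp (A/nR)) * ((Q/nR) * Real.exp (Q/nR)) := by
    have h1 : f^m - y^m = y^m * ((1+u)^m - 1) := by rw [hfyu, mul_pow]; ring
    rw [h1, norm_mul, norm_pow]
    calc ((norm : ℂ → ℝ) y)^m * (norm : ℂ → ℝ) ((1+u)^m - 1)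
        ≤ ((norm : ℂ → ℝ) L * Real.exp (A/nR)) *
            (((m:ℝ) * (norm : ℂ → ℝ) u) * Real.exp ((m:ℝ) * (norm : ℂ → ℝ) u)) := by
          apply mul_le_mul hym_le (one_add_pow_sub_one u m) (norm_nonneg _) ?_
          positivity
      _ ≤ ((norm : ℂ → ℝ) L * Real.exp (A/nR)) * ((Q/nR) * Real.exp (Q/nR)) := by
          apply mul_le_mul_of_nonneg_left ?_ (by positivity)
          apply mul_le_mul hmu (Real.exp_le_exp.mpr hmu) (Real.exp_pos _).le hQn0
  have hterm2 : (norm : ℂ → ℝ) (y^m - L) ≤ (norm : ℂ → ℝ) L * ((A + (3/4)*A^2/nR)/nR) := by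
    have hym : y^m = Complex.exp ((m:ℂ) * (a/(n:ℂ))) := by
      rw [hy, ← Complex.exp_nat_mul]
    set w : ℂ := a * ((((m:ℝ)/nR - t) : ℝ) : ℂ) with hw
    have harg : (m:ℂ) * (a/(n:ℂ)) = a*(t:ℂ) + w := by
      rw [hw, hnRdef]
      push_cast
      field_simp
      ring
    have hsplit : y^m - L = L * (Complex.exp w - 1) := by
      rw [hym, harg, Complex.exp_add, hL]; ring
    rw [hsplit, norm_mul]
    apply mul_le_mul_of_nonneg_left ?_ (norm_nonneg L)
    have e1 : (m:ℝ)/nR ≤ t := by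
      rw [div_le_iff₀ hnR]; linarith
    have e2 : t - 1/nR ≤ (m:ℝ)/nR := by
      have h1 : t ≤ ((m:ℝ)+1)/nR := by rw [le_div_iff₀ hnR]; linarith
      rw [add_div] at h1
      linarith
    have h1 : |(m:ℝ)/nR - t| ≤ 1/nR := by
      rw [abs_le]
      constructor
      · linarith
      · have : (0:ℝ) ≤ 1/nR := by positivity
        linarith
    have habsw : (norm : ℂ → ℝ) w ≤ A/nR := by
      rw [hw, norm_mul, Complex.norm_real, Real.norm_eq_abs, ← hA]
      calc A * |(m:ℝ)/nR - t| ≤ A * (1/nR) := by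
            apply mul_le_mul_of_nonneg_left h1 hA0.le
        _ = A/nR := by ring
    have hw1 : (norm : ℂ → ℝ) w ≤ 1 := habsw.trans (by rw [div_le_one hnR]; exact hAn)
    have h2 := Complex.exp_bound hw1 (show 0 < 2 by norm_num)
    have h3 : ∑ i ∈ Finset.range 2, w^i/(i.factorial:ℂ) = 1 + w := by
      rw [Finset.sum_range_succ, Finset.sum_range_one]
      norm_num [Nat.factorial]
    rw [h3] at h2
    calc (norm : ℂ → ℝ) (Complex.exp w - 1)
        ≤ (norm : ℂ → ℝ) (Complex.exp w - (1+w)) + (norm : ℂ → ℝ) w := by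
          have e : Complex.exp w - 1 = (Complex.exp w - (1+w)) + w := by ring
          rw [e]
          exact norm_add_le _ _
      _ ≤ (norm : ℂ → ℝ) w ^ 2 * (((2:ℕ).succ : ℝ) * (((2:ℕ).factorial : ℝ) * 2)⁻¹) + (norm : ℂ → ℝ) w :=
          add_le_add h2 le_rfl
      _ = (norm : ℂ → ℝ) w ^ 2 * (3/4) + (norm : ℂ → ℝ) w := by
          norm_num [Nat.factorial]
      _ ≤ (A/nR)^2 * (3/4) + A/nR := by gcongr
      _ = (A + (3/4)*A^2/nR)/nR := by field_simp; ring
  have hgval : g (1/nR) = Real.exp (A/nR) * Q * Real.exp (Q/nR) + A + (3/4)*A^2/nR := by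
    rw [hg]
    simp only [mul_one_div, one_div_mul_eq_div]
    rw [hQ]
  have hfinal : (norm : ℂ → ℝ) (f^m - L) ≤ (norm : ℂ → ℝ) L * g (1/nR) * (1/nR) := by
    have h1 : f^m - L = (f^m - y^m) + (y^m - L) := by ring
    rw [h1]
    calc (norm : ℂ → ℝ) ((f^m - y^m) + (y^m - L))
        ≤ (norm : ℂ → ℝ) (f^m - y^m) + (norm : ℂ → ℝ) (y^m - L) := norm_add_le _ _
      _ ≤ ((norm : ℂ → ℝ) L * Real.exp (A/nR)) * ((Q/nR) * Real.exp (Q/nR))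
            + (norm : ℂ → ℝ) L * ((A + (3/4)*A^2/nR)/nR) := add_le_add hterm1 hterm2
      _ = (norm : ℂ → ℝ) L * g (1/nR) * (1/nR) := by
          rw [hgval]
          field_simp
          ring
  have habsc : (norm : ℂ → ℝ) c = (norm : ℂ → ℝ) α * (norm : ℂ → ℝ) l ^ N := by
    rw [hc, norm_mul, norm_mul, norm_pow, norm_pow, Complex.norm_I, one_pow, one_mul]
    ring
  have hAeq : (norm : ℂ → ℝ) (α * l^N) / ((N.factorial:ℕ):ℝ) = A := by
    rw [hA, ha, norm_div, Complex.norm_natCast, habsc, norm_mul, norm_pow]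
  have hc2 : (norm : ℂ → ℝ) c ^ 2 = (norm : ℂ → ℝ) α ^ 2 * (norm : ℂ → ℝ) l ^ (2*N) := by
    rw [habsc, mul_pow, ← pow_mul, Nat.mul_comm N 2]
  have hBeq : (norm : ℂ → ℝ) α ^ 2 * t * (norm : ℂ → ℝ) l ^ (2 * N) *
      (1 / (2 * ((N.factorial:ℕ) : ℝ) ^ 2) - 1 / (((2 * N).factorial : ℕ) : ℝ)) = t * B := by
    rw [hB, hc2]
    ring
  rw [hAeq, hBeq]
  calc (norm : ℂ → ℝ) (f^m - L) ≤ (norm : ℂ → ℝ) L * g (1/nR) * (1/nR) := hfinal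
    _ < (norm : ℂ → ℝ) L * ((1+ε)*(A + t*B)) * (1/nR) := by
        apply mul_lt_mul_of_pos_right ?_ (by positivity)
        exact mul_lt_mul_of_pos_left hg_n hLpos
    _ = (1+ε) * ((norm : ℂ → ℝ) L * (A + t*B)) / nR := by ring
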